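/- The Lobachevsky function is strictly positive on (0, π/2): for every θ with 0 < θ < π/2, Λ(θ) > 0. -/

import Mathlib

open MeasureTheory Real

/-- The Lobachevsky function `Λ(θ) = -∫₀^θ log |2 sin t| dt`. -/
noncomputable def lobachevsky (θ : ℝ) : ℝ :=
  -∫ t in (0:ℝ)..θ, Real.log |2 * Real.sin t|

namespace LobachevskyAux

/-- abbreviation for the integrand -/
noncomputable def g (t : ℝ) : ℝ := Real.log |2 * Real.sin t|

lemma g_meas : Measurable g :=
  Real.measurable_log.comp ((Real.measurable_sin.const_mul 2).abs)

lemma abs_log_le {t : ℝ} (ht : 0 < t) (ht2 : t ≤ 2) :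
    |Real.log t| ≤ 2 * t ^ (-(1/2) : ℝ) := by
  have hs : 0 < Real.sqrt t := Real.sqrt_pos.2 ht
  have hrpow : t ^ (-(1/2) : ℝ) = (Real.sqrt t)⁻¹ := by
    rw [Real.rpow_neg ht.le, Real.sqrt_eq_rpow]
  rcases le_or_gt 1 t with h1 | h1
  · have hlog : Real.log t ≤ t - 1 := Real.log_le_sub_one_of_pos ht
    have habs : |Real.log t| = Real.log t := abs_of_nonneg (Real.log_nonneg h1)
    have hu2 : Real.sqrt t ≤ 2 := by
      nlinarith [Real.sq_sqrt ht.le, Real.sqrt_nonneg t]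
    rw [habs, hrpow, show 2 * (Real.sqrt t)⁻¹ = 2 / Real.sqrt t by ring,
      le_div_iff₀ hs]
    nlinarith [Real.log_nonneg h1]
  · have habs : |Real.log t| = -Real.log t := abs_of_nonpos (Real.log_nonpos ht.le h1.le)
    have hlog : Real.log (Real.sqrt t)⁻¹ ≤ (Real.sqrt t)⁻¹ - 1 :=
      Real.log_le_sub_one_of_pos (by positivity)
    have : Real.log (Real.sqrt t)⁻¹ = -(Real.log t / 2) := by
      rw [Real.log_inv, Real.log_sqrt ht.le]
    rw [habs, hrpow]
    nlinarith [hlog, this]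

lemma g_bound {t : ℝ} (ht : 0 < t) (ht2 : t ≤ Real.pi / 2) :
    |g t| ≤ 2 * t ^ (-(1/2) : ℝ) + Real.log 2 := by
  have hπ : Real.pi / 2 ≤ 2 := by nlinarith [Real.pi_le_four]
  have hsinpos : 0 < Real.sin t :=
    Real.sin_pos_of_pos_of_lt_pi ht (lt_of_le_of_lt ht2 (by nlinarith [Real.pi_pos]))
  have hgeq : g t = Real.log (2 * Real.sin t) := by
    rw [g, abs_of_pos (by positivity)]
  have hsle : Real.sin t ≤ t := Real.sin_le ht.le
  have hsge : 2 / Real.pi * t ≤ Real.sin t := Real.mul_le_sin ht.le ht2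
  have hub : g t ≤ Real.log t + Real.log 2 := by
    rw [hgeq]
    calc Real.log (2 * Real.sin t) ≤ Real.log (2 * t) :=
      Real.log_le_log (by positivity) (by nlinarith)
    _ = Real.log 2 + Real.log t := Real.log_mul (by norm_num) ht.ne'
    _ = Real.log t + Real.log 2 := by ring
  have hsge' : 2 * t ≤ Real.sin t * Real.pi := by
    rw [div_mul_eq_mul_div, div_le_iff₀ Real.pi_pos] at hsge; linarith
  have hlb : Real.log t + Real.log (4 / Real.pi) ≤ g t := by
    rw [hgeq]
    have h4π : 0 < 4 / Real.pi := by positivity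
    calc Real.log t + Real.log (4 / Real.pi) = Real.log (4 / Real.pi * t) := by
          rw [Real.log_mul h4π.ne' ht.ne']; ring
    _ ≤ Real.log (2 * Real.sin t) := by
          apply Real.log_le_log (by positivity)
          rw [div_mul_eq_mul_div, div_le_iff₀ Real.pi_pos]
          nlinarith [hsge']
  have h4π1 : (0:ℝ) ≤ Real.log (4 / Real.pi) :=
    Real.log_nonneg (by rw [le_div_iff₀ Real.pi_pos]; nlinarith [Real.pi_le_four])
  have hlogt : |Real.log t| ≤ 2 * t ^ (-(1/2) : ℝ) := abs_log_le ht (le_trans ht2 hπ)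
  have h1 := le_abs_self (Real.log t)
  have h2 := neg_abs_le (Real.log t)
  rw [abs_le]
  constructor <;> nlinarith

lemma g_integrable {b : ℝ} (hb0 : 0 ≤ b) (hb : b ≤ Real.pi / 2) :
    IntervalIntegrable g volume 0 b := by
  have hdom : IntervalIntegrable (fun t : ℝ => 2 * t ^ (-(1/2) : ℝ) + Real.log 2)
      volume 0 b :=
    ((intervalIntegral.intervalIntegrable_rpow' (by norm_num)).const_mul 2).add
      intervalIntegrable_const
  refine hdom.mono_fun (g_meas.aestronglyMeasurable) ?_
  have huIoc : Set.uIoc (0:ℝ) b = Set.Ioc 0 b := Set.uIoc_of_le hb0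
  rw [huIoc]
  refine MeasureTheory.ae_restrict_of_forall_mem measurableSet_Ioc ?_
  intro t htm
  have ht : 0 < t := htm.1
  have ht2 : t ≤ Real.pi / 2 := le_trans htm.2 hb
  have hb1 := g_bound ht ht2
  have hpos : 0 < 2 * t ^ (-(1/2) : ℝ) + Real.log 2 := by
    have : 0 < t ^ (-(1/2) : ℝ) := Real.rpow_pos_of_pos ht _
    nlinarith [Real.log_pos (by norm_num : (1:ℝ) < 2)]
  simp only [Real.norm_eq_abs]
  exact le_trans hb1 (le_abs_self _)

lemma g_pi_sub (t : ℝ) : g (Real.pi - t) = g t := by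
  simp [g, Real.sin_pi_sub]

lemma g_integrable' : IntervalIntegrable g volume (Real.pi / 2) Real.pi := by
  have h := (g_integrable (by positivity) le_rfl).comp_sub_left Real.pi
  have heq : (fun x => g (Real.pi - x)) = g := funext g_pi_sub
  rw [heq, show Real.pi - 0 = Real.pi by ring,
    show Real.pi - Real.pi / 2 = Real.pi / 2 by ring] at h
  exact h.symm

lemma integral_g_eq_zero : ∫ t in (0:ℝ)..(Real.pi / 2), g t = 0 := by
  set I := ∫ t in (0:ℝ)..(Real.pi / 2), g t with hI
  have hgint := g_integrable (by positivity) le_rfl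
  -- cos-version integrable
  have hcint : IntervalIntegrable (fun t => g (Real.pi / 2 - t)) volume 0 (Real.pi / 2) := by
    have h := hgint.comp_sub_left (Real.pi / 2)
    rw [show Real.pi / 2 - 0 = Real.pi / 2 by ring,
      show Real.pi / 2 - Real.pi / 2 = 0 by ring] at h
    exact h.symm
  -- cos-version has the same integral
  have hIc : (∫ t in (0:ℝ)..(Real.pi / 2), g (Real.pi / 2 - t)) = I := by
    rw [intervalIntegral.integral_comp_sub_left g (Real.pi / 2)]
    norm_num
    exact hI.symm
  -- sum
  have hsum : I + I = ∫ t in (0:ℝ)..(Real.pi / 2), (g t + g (Real.pi / 2 - t)) := by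
    rw [intervalIntegral.integral_add hgint hcint, hIc]
  -- pointwise identity a.e.
  have hae : (∫ t in (0:ℝ)..(Real.pi / 2), (g t + g (Real.pi / 2 - t)))
      = ∫ t in (0:ℝ)..(Real.pi / 2), g (2 * t) := by
    apply intervalIntegral.integral_congr_ae
    have hne : ∀ᵐ (t : ℝ), t ≠ Real.pi / 2 := by
      rw [MeasureTheory.ae_iff]
      have : {t : ℝ | ¬ t ≠ Real.pi / 2} = {Real.pi / 2} := by ext x; simp
      rw [this]
      exact Real.volume_singleton
    filter_upwards [hne] with t ht htm
    rw [Set.uIoc_of_le (by positivity : (0:ℝ) ≤ Real.pi / 2)] at htm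
    have ht0 : 0 < t := htm.1
    have ht2 : t < Real.pi / 2 := lt_of_le_of_ne htm.2 ht
    have hsinpos : 0 < Real.sin t :=
      Real.sin_pos_of_pos_of_lt_pi ht0 (by nlinarith [Real.pi_pos])
    have hcospos : 0 < Real.cos t := Real.cos_pos_of_mem_Ioo ⟨by nlinarith [Real.pi_pos], ht2⟩
    have h1 : g t = Real.log (2 * Real.sin t) := by rw [g, abs_of_pos (by positivity)]
    have h2 : g (Real.pi / 2 - t) = Real.log (2 * Real.cos t) := by
      rw [g, Real.sin_pi_div_two_sub, abs_of_pos (by positivity)]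
    have h3 : g (2 * t) = Real.log (2 * Real.sin t * (2 * Real.cos t)) := by
      rw [g, Real.sin_two_mul, abs_of_pos (by positivity)]
      ring_nf
    have hsn : 2 * Real.sin t ≠ 0 := by positivity
    have hcn : 2 * Real.cos t ≠ 0 := by positivity
    rw [h1, h2, h3]
    conv_rhs => rw [Real.log_mul hsn hcn]
  -- doubling substitution
  have hdbl : (∫ t in (0:ℝ)..(Real.pi / 2), g (2 * t)) = (2:ℝ)⁻¹ • ∫ t in (0:ℝ)..Real.pi, g t := by
    rw [intervalIntegral.integral_comp_mul_left g (by norm_num : (2:ℝ) ≠ 0),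
      show (2:ℝ) * 0 = 0 by ring, show (2:ℝ) * (Real.pi / 2) = Real.pi by ring]
  -- split [0,π] and symmetry
  have hsplit : (∫ t in (0:ℝ)..Real.pi, g t) = I + ∫ t in (Real.pi / 2)..Real.pi, g t :=
    (intervalIntegral.integral_add_adjacent_intervals hgint g_integrable').symm
  have hsym : (∫ t in (Real.pi / 2)..Real.pi, g t) = I := by
    have : (∫ t in (Real.pi / 2)..Real.pi, g t)
        = ∫ t in (Real.pi / 2)..Real.pi, g (Real.pi - t) := by
      simp_rw [g_pi_sub]
    rw [this, intervalIntegral.integral_comp_sub_left g Real.pi,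
      show Real.pi - Real.pi = 0 by ring, show Real.pi - Real.pi / 2 = Real.pi / 2 by ring]
  have key : I + I = I := by
    calc I + I = ∫ t in (0:ℝ)..(Real.pi / 2), (g t + g (Real.pi / 2 - t)) := hsum
    _ = ∫ t in (0:ℝ)..(Real.pi / 2), g (2 * t) := hae
    _ = (2:ℝ)⁻¹ • ∫ t in (0:ℝ)..Real.pi, g t := hdbl
    _ = (2:ℝ)⁻¹ • (I + I) := by rw [hsplit, hsym]
    _ = I := by rw [smul_eq_mul]; ring
  linarith

end LobachevskyAux

open LobachevskyAux in
/-- Λ is strictly positive on (0, π/2). -/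
theorem lobachevsky_pos {θ : ℝ} (h0 : 0 < θ) (h1 : θ < Real.pi / 2) :
    0 < lobachevsky θ := by
  have hθint : IntervalIntegrable g volume 0 θ := g_integrable h0.le h1.le
  have hneg : (∫ t in (0:ℝ)..θ, g t) < 0 := by
    rcases le_or_gt θ (Real.pi / 6) with hθ6 | hθ6
    · -- integrand negative on (0,θ)
      have hpos : 0 < ∫ t in (0:ℝ)..θ, -g t := by
        apply intervalIntegral.intervalIntegral_pos_of_pos_on hθint.neg _ h0
        intro t ht
        obtain ⟨ht1, ht2'⟩ := ht
        have ht6 : t < Real.pi / 6 := lt_of_lt_of_le ht2' hθ6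
        have hsinpos : 0 < Real.sin t :=
          Real.sin_pos_of_pos_of_lt_pi ht1 (by nlinarith [Real.pi_pos])
        have hs : Real.sin t < 1 / 2 := by
          have := Real.strictMonoOn_sin (a := t) (b := Real.pi / 6)
            ⟨by nlinarith [Real.pi_pos], by nlinarith [Real.pi_pos]⟩
            ⟨by nlinarith [Real.pi_pos], by nlinarith [Real.pi_pos]⟩ ht6
          rwa [Real.sin_pi_div_six] at this
        have hgt : g t < 0 := by
          rw [g, abs_of_pos (by positivity)]
          exact Real.log_neg (by positivity) (by nlinarith)
        simp only [Pi.neg_apply]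
        linarith
      rw [intervalIntegral.integral_neg] at hpos
      linarith
    · -- integrand positive on (θ, π/2)
      have hrint : IntervalIntegrable g volume θ (Real.pi / 2) := by
        apply (g_integrable (by positivity) le_rfl).mono_set
        rw [Set.uIcc_of_le h1.le, Set.uIcc_of_le (by positivity : (0:ℝ) ≤ Real.pi / 2)]
        exact Set.Icc_subset_Icc h0.le le_rfl
      have hpos : 0 < ∫ t in θ..(Real.pi / 2), g t := by
        apply intervalIntegral.intervalIntegral_pos_of_pos_on hrint _ h1
        intro t ht
        obtain ⟨ht1, ht2'⟩ := ht
        have ht6 : Real.pi / 6 < t := lt_trans hθ6 ht1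
        have hs : 1 / 2 < Real.sin t := by
          have := Real.strictMonoOn_sin (a := Real.pi / 6) (b := t)
            ⟨by nlinarith [Real.pi_pos], by nlinarith [Real.pi_pos]⟩
            ⟨by nlinarith [Real.pi_pos], ht2'.le⟩ ht6
          rwa [Real.sin_pi_div_six] at this
        rw [g, abs_of_pos (by nlinarith)]
        exact Real.log_pos (by nlinarith)
      have hadd : (∫ t in (0:ℝ)..θ, g t) + ∫ t in θ..(Real.pi / 2), g t = 0 := by
        rw [intervalIntegral.integral_add_adjacent_intervals hθint hrint]
        exact integral_g_eq_zero
      linarith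
  have : lobachevsky θ = -∫ t in (0:ℝ)..θ, g t := rfl
  rw [this]
  linarith
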